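/- arXiv:1704.01278 — 2 statements merged into one kernel-verified Lean document; each statement's English description precedes it below -/
import Mathlib

section
/- Let (R, 𝔪) be a Noetherian local ring, I an 𝔪-primary ideal, and a ∈ I a nonzerodivisor of R with I² = aI. Then I/I² is a free R/I-module if and only if I/(a) is a free R/I-module. -/
open Submodule

section Aux

variable {R : Type*} [CommRing R]

/-- `M × (Fin n → M) ≃ₗ (Fin (n+1) → M)` via `Fin.cons`. -/
def finConsLinearEquiv (R M : Type*) [Semiring R] [AddCommMonoid M] [Module R M] (n : ℕ) :
    (M × (Fin n → M)) ≃ₗ[R] (Fin (n + 1) → M) where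
  toFun p := Fin.cons p.1 p.2
  invFun f := (f 0, f ∘ Fin.succ)
  map_add' p q := by
    funext j
    refine Fin.cases ?_ (fun j => ?_) j <;> simp
  map_smul' r p := by
    funext j
    refine Fin.cases ?_ (fun j => ?_) j <;> simp
  left_inv p := by
    refine Prod.ext (by simp) (funext fun j => ?_)
    simp
  right_inv f := by
    funext j
    refine Fin.cases ?_ (fun j => ?_) j <;> simp

/-- Backward direction, abstractly: if `M` is killed by `I`, `x : M` has annihilator
exactly `I`, and `M ⧸ R∙x` is free over `R⧸I`, then so is `M`. -/
theorem aux_back (I : Ideal R) {M : Type*} [AddCommGroup M] [Module R M]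
    (htor : ∀ r ∈ I, ∀ m : M, r • m = 0)
    (x : M) (hann : ∀ r : R, r • x = 0 ↔ r ∈ I)
    (n : ℕ) (e : (M ⧸ (R ∙ x)) ≃ₗ[R] (Fin n → R ⧸ I)) :
    Nonempty (M ≃ₗ[R] (Fin (n + 1) → R ⧸ I)) := by
  classical
  let q : M →ₗ[R] (Fin n → R ⧸ I) := e.toLinearMap ∘ₗ (R ∙ x).mkQ
  have hqsurj : Function.Surjective q := by
    intro v
    obtain ⟨m, hm⟩ := (R ∙ x).mkQ_surjective (e.symm v)
    exact ⟨m, by simp [q, hm]⟩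
  choose m hm using fun i : Fin n => hqsurj (Pi.single i (1 : R ⧸ I))
  let τ : (Fin n → R) →ₗ[R] M := Fintype.linearCombination R m
  let p : Fin n → Submodule R R := fun _ => (I : Submodule R R)
  have hker : Submodule.pi Set.univ p ≤ LinearMap.ker τ := by
    intro f hf
    simp only [LinearMap.mem_ker, τ, Fintype.linearCombination_apply]
    exact Finset.sum_eq_zero fun i _ => htor _ (hf i trivial) _
  let σ : (Fin n → R ⧸ I) →ₗ[R] M :=
    (Submodule.liftQ _ τ hker) ∘ₗ (Submodule.quotientPi p).symm.toLinearMap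
  have hsec : ∀ v, q (σ v) = v := by
    intro v
    obtain ⟨w, hw⟩ := (Submodule.quotientPi p).surjective v
    obtain ⟨f, hf⟩ := Submodule.Quotient.mk_surjective _ w
    have hf' : Submodule.quotientPi p (Submodule.Quotient.mk f) = v := by rw [hf, hw]
    have h1 : σ v = τ f := by
      have : (Submodule.quotientPi p).symm v = Submodule.Quotient.mk f := by
        rw [← hf']; exact (Submodule.quotientPi p).symm_apply_apply _
      simp only [σ, LinearMap.comp_apply, LinearEquiv.coe_coe, this, Submodule.liftQ_apply]
    have h2 : q (τ f) = ∑ i, f i • (Pi.single i 1 : Fin n → R ⧸ I) := by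
      simp only [τ, Fintype.linearCombination_apply, map_sum, map_smul]
      exact Finset.sum_congr rfl fun i _ => by rw [hm i]
    have h3 : Submodule.quotientPi p (Submodule.Quotient.mk f)
        = fun i => (Submodule.Quotient.mk (f i) : R ⧸ p i) := rfl
    rw [h1, h2, ← hf', h3]
    funext j
    simp only [Finset.sum_apply, Pi.smul_apply]
    rw [Finset.sum_eq_single j]
    · rw [Pi.single_eq_same]
      show f j • Submodule.Quotient.mk (1 : R) = _
      rw [← Submodule.Quotient.mk_smul, smul_eq_mul, mul_one]
    · intro i _ hij
      rw [Pi.single_eq_of_ne (Ne.symm hij), smul_zero]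
    · intro h; exact absurd (Finset.mem_univ j) h
  have hmemker : ∀ y : M, y - σ (q y) ∈ LinearMap.ker q := by
    intro y
    simp [LinearMap.mem_ker, map_sub, hsec]
  let E : M ≃ₗ[R] (↥(LinearMap.ker q) × (Fin n → R ⧸ I)) := {
    toFun := fun y => (⟨y - σ (q y), hmemker y⟩, q y)
    invFun := fun pr => pr.1.1 + σ pr.2
    map_add' := fun y z => by
      refine Prod.ext (Subtype.ext ?_) (map_add q y z)
      simp only [map_add, Prod.fst_add, Submodule.coe_add]
      abel
    map_smul' := fun r y => by
      refine Prod.ext (Subtype.ext ?_) (map_smul q r y)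
      simp only [map_smul, Prod.smul_fst, SetLike.val_smul, RingHom.id_apply, smul_sub]
    left_inv := fun y => by simp
    right_inv := fun pr => by
      have h0 : q pr.1.1 = 0 := LinearMap.mem_ker.mp pr.1.2
      refine Prod.ext (Subtype.ext ?_) ?_
      · simp [map_add, h0, hsec]
      · simp [map_add, h0, hsec] }
  have hkerq : LinearMap.ker q = R ∙ x := by
    show LinearMap.ker (e.toLinearMap ∘ₗ (R ∙ x).mkQ) = R ∙ x
    rw [LinearMap.ker_comp, LinearEquiv.ker, Submodule.comap_bot, Submodule.ker_mkQ]
  let α : R →ₗ[R] M := LinearMap.toSpanSingleton R M x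
  have hkerα : (I : Submodule R R) = LinearMap.ker α := by
    ext r
    simp only [LinearMap.mem_ker, α, LinearMap.toSpanSingleton_apply]
    exact (Iff.comm.mp (hann r))
  have hrangeα : LinearMap.range α = LinearMap.ker q := by
    rw [hkerq]
    exact (LinearMap.span_singleton_eq_range R M x).symm
  let eker : (R ⧸ I) ≃ₗ[R] ↥(LinearMap.ker q) :=
    (Submodule.quotEquivOfEq _ _ hkerα).trans
      ((α.quotKerEquivRange).trans (LinearEquiv.ofEq _ _ hrangeα))
  exact ⟨E.trans ((eker.symm.prodCongr (LinearEquiv.refl R _)).trans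
    (finConsLinearEquiv R (R ⧸ I) n))⟩

set_option maxHeartbeats 1000000 in
/-- Forward direction, abstractly. -/
theorem aux_fwd [IsLocalRing R] (I : Ideal R) (hne : I ≠ ⊤)
    (hnil : ∃ k : ℕ, IsLocalRing.maximalIdeal R ^ k ≤ I)
    {M : Type*} [AddCommGroup M] [Module R M]
    (x : M) (hann : ∀ r : R, r • x = 0 ↔ r ∈ I)
    (N : ℕ) (e : M ≃ₗ[R] (Fin N → R ⧸ I)) :
    ∃ n : ℕ, Nonempty ((M ⧸ (R ∙ x)) ≃ₗ[R] (Fin n → R ⧸ I)) := by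
  classical
  haveI : Nontrivial (R ⧸ I) := Ideal.Quotient.nontrivial_iff.mpr hne
  set y : Fin N → R ⧸ I := e x with hy
  have hanny : ∀ r : R, r • y = 0 ↔ r ∈ I := by
    intro r
    rw [hy, ← map_smul, ← hann r]
    exact ⟨fun h => by simpa using e.injective (by simpa using h),
      fun h => by rw [h, map_zero]⟩
  set mS : Ideal (R ⧸ I) := (IsLocalRing.maximalIdeal R).map (Ideal.Quotient.mk I) with hmS
  have hnilS : ∃ k : ℕ, mS ^ k = ⊥ := by
    obtain ⟨k, hk⟩ := hnil
    refine ⟨k, le_bot_iff.mp ?_⟩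
    rw [hmS, ← Ideal.map_pow, ← Ideal.map_quotient_self I]
    exact Ideal.map_mono hk
  have hunit : ∃ i, IsUnit (y i) := by
    by_contra hcon
    push_neg at hcon
    have hmem : ∀ i, y i ∈ mS := by
      intro i
      obtain ⟨r, hr⟩ := Ideal.Quotient.mk_surjective (y i)
      have hrm : r ∈ IsLocalRing.maximalIdeal R := by
        by_contra hrm
        exact hcon i (hr ▸ (IsLocalRing.notMem_maximalIdeal.mp hrm).map (Ideal.Quotient.mk I))
      exact hr ▸ Ideal.mem_map_of_mem _ hrm
    have hk : mS ^ (Nat.find hnilS) = ⊥ := Nat.find_spec hnilS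
    have hk0 : Nat.find hnilS ≠ 0 := by
      intro h
      rw [h, pow_zero, Ideal.one_eq_top] at hk
      exact one_ne_zero ((Submodule.eq_bot_iff _).mp hk 1 Submodule.mem_top)
    obtain ⟨t, htmem, htne⟩ := Submodule.exists_mem_ne_zero_of_ne_bot
      (Nat.find_min hnilS (Nat.pred_lt hk0) : mS ^ (Nat.find hnilS - 1) ≠ ⊥)
    obtain ⟨r, hr⟩ := Ideal.Quotient.mk_surjective t
    have hry : r • y = 0 := by
      funext i
      have hmul : t * y i ∈ mS ^ (Nat.find hnilS - 1) * mS := Ideal.mul_mem_mul htmem (hmem i)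
      rw [← pow_succ, Nat.sub_add_cancel (Nat.one_le_iff_ne_zero.mpr hk0), hk] at hmul
      have h1 : r • y i = t * y i := by
        rw [← hr, ← algebraMap_smul (R ⧸ I) r (y i), Ideal.Quotient.algebraMap_eq, smul_eq_mul]
      simp only [Pi.smul_apply, Pi.zero_apply]
      rw [h1]
      exact (Submodule.mem_bot _).mp hmul
    exact htne (by rw [← hr, Ideal.Quotient.eq_zero_iff_mem]; exact (hanny r).mp hry)
  obtain ⟨i, hu⟩ := hunit
  obtain ⟨N', rfl⟩ : ∃ N', N = N' + 1 :=
    ⟨N - 1, (Nat.succ_pred_eq_of_pos (Nat.pos_of_ne_zero (by rintro rfl; exact i.elim0))).symm⟩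
  set u := hu.unit with hudef
  have huy : (u : R ⧸ I) = y i := hu.unit_spec
  set c : Fin (N' + 1) → R ⧸ I := y - Pi.single i 1 with hc
  have hci : c i = (u : R ⧸ I) - 1 := by
    rw [hc, Pi.sub_apply, Pi.single_eq_same, huy]
  have hinv : ((u⁻¹ : (R ⧸ I)ˣ) : R ⧸ I) * (u : R ⧸ I) = 1 := Units.inv_mul u
  -- automorphism sending `Pi.single i 1` to `y`
  let g : (Fin (N' + 1) → R ⧸ I) ≃ₗ[R] (Fin (N' + 1) → R ⧸ I) := {
    toFun := fun v => v + v i • c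
    invFun := fun w => w - (((u⁻¹ : (R ⧸ I)ˣ) : R ⧸ I) * w i) • c
    map_add' := fun v w => by
      simp only [Pi.add_apply, add_smul]
      abel
    map_smul' := fun r v => by
      simp only [Pi.smul_apply, RingHom.id_apply, smul_add, smul_assoc]
    left_inv := fun v => by
      show v + v i • c - (((u⁻¹ : (R ⧸ I)ˣ) : R ⧸ I) * (v + v i • c) i) • c = v
      have h1 : (v + v i • c) i = v i * (u : R ⧸ I) := by
        simp only [Pi.add_apply, Pi.smul_apply, smul_eq_mul, hci]
        ring
      rw [h1]
      have h2 : ((u⁻¹ : (R ⧸ I)ˣ) : R ⧸ I) * (v i * (u : R ⧸ I)) = v i := by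
        rw [mul_comm (v i), ← mul_assoc, hinv, one_mul]
      rw [h2]
      abel
    right_inv := fun w => by
      show w - (((u⁻¹ : (R ⧸ I)ˣ) : R ⧸ I) * w i) • c
          + (w - (((u⁻¹ : (R ⧸ I)ˣ) : R ⧸ I) * w i) • c) i • c = w
      have h1 : (w - (((u⁻¹ : (R ⧸ I)ˣ) : R ⧸ I) * w i) • c) i
          = ((u⁻¹ : (R ⧸ I)ˣ) : R ⧸ I) * w i := by
        simp only [Pi.sub_apply, Pi.smul_apply, smul_eq_mul, hci]
        linear_combination (-(w i)) * hinv
      rw [h1]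
      abel }
  have hgdef : ∀ v, g v = v + v i • c := fun _ => rfl
  have hgy : g (Pi.single i 1) = y := by
    rw [hgdef, Pi.single_eq_same, one_smul, hc]
    abel
  have hgsymm : g.symm y = Pi.single i 1 := by
    rw [← hgy, g.symm_apply_apply]
  -- swap coordinates `i` and `0`
  let sw : (Fin (N' + 1) → R ⧸ I) ≃ₗ[R] (Fin (N' + 1) → R ⧸ I) :=
    LinearEquiv.funCongrLeft R (R ⧸ I) (Equiv.swap (0 : Fin (N' + 1)) i)
  have hswy : sw (Pi.single i 1) = Pi.single 0 1 := by
    funext j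
    show (Pi.single i 1 : Fin (N' + 1) → R ⧸ I) (Equiv.swap (0 : Fin (N' + 1)) i j) = _
    rcases eq_or_ne j 0 with rfl | hj0
    · rw [Equiv.swap_apply_left, Pi.single_eq_same, Pi.single_eq_same]
    · rcases eq_or_ne j i with rfl | hji
      · rw [Equiv.swap_apply_right, Pi.single_eq_of_ne (Ne.symm hj0),
          Pi.single_eq_of_ne hj0]
      · rw [Equiv.swap_apply_of_ne_of_ne hj0 hji, Pi.single_eq_of_ne hji,
          Pi.single_eq_of_ne hj0]
  let φ : M ≃ₗ[R] (Fin (N' + 1) → R ⧸ I) := e.trans (g.symm.trans sw)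
  have hφx : φ x = Pi.single 0 1 := by
    show sw (g.symm (e x)) = _
    rw [← hy, hgsymm, hswy]
  -- projection away from coordinate zero
  let proj : (Fin (N' + 1) → R ⧸ I) →ₗ[R] (Fin N' → R ⧸ I) :=
    LinearMap.funLeft R (R ⧸ I) Fin.succ
  have hprojsurj : Function.Surjective proj := by
    intro w
    exact ⟨Fin.cons 0 w, funext fun j => by simp [proj, LinearMap.funLeft_apply]⟩
  have hkerproj : (R ∙ (Pi.single (0 : Fin (N' + 1)) (1 : R ⧸ I))) = LinearMap.ker proj := by
    apply le_antisymm
    · rw [Submodule.span_singleton_le_iff_mem, LinearMap.mem_ker]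
      funext j
      show (Pi.single (0 : Fin (N' + 1)) (1 : R ⧸ I) : Fin (N' + 1) → R ⧸ I) (Fin.succ j) = 0
      exact Pi.single_eq_of_ne (Fin.succ_ne_zero j) 1
    · intro v hv
      have hv' : ∀ j : Fin N', v (Fin.succ j) = 0 := fun j =>
        congrFun (LinearMap.mem_ker.mp hv) j
      obtain ⟨r, hr⟩ := Ideal.Quotient.mk_surjective (v 0)
      rw [Submodule.mem_span_singleton]
      refine ⟨r, ?_⟩
      have hsingle : r • (Pi.single 0 1 : Fin (N' + 1) → R ⧸ I)
          = (Pi.single 0 (Ideal.Quotient.mk I r) : Fin (N' + 1) → R ⧸ I) := by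
        rw [← Pi.single_smul]
        congr 1
        rw [← algebraMap_smul (R ⧸ I) r (1 : R ⧸ I), Ideal.Quotient.algebraMap_eq,
          smul_eq_mul, mul_one]
      rw [hsingle]
      funext j
      refine Fin.cases ?_ (fun j => ?_) j
      · rw [Pi.single_eq_same, hr]
      · rw [Pi.single_eq_of_ne (Fin.succ_ne_zero j), hv' j]
  set z : Fin (N' + 1) → R ⧸ I := Pi.single 0 1 with hz
  have hmapφ : Submodule.map (φ : M →ₗ[R] (Fin (N' + 1) → R ⧸ I)) (R ∙ x)
      = R ∙ z := by
    rw [Submodule.map_span, Set.image_singleton]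
    show (R ∙ φ x) = _
    rw [hφx, hz]
  have E1 : (M ⧸ (R ∙ x)) ≃ₗ[R] ((Fin (N' + 1) → R ⧸ I) ⧸ (R ∙ z)) :=
    Submodule.Quotient.equiv (R ∙ x) (R ∙ z) φ hmapφ
  have hkerproj' : (R ∙ z) = LinearMap.ker proj := by rw [hz]; exact hkerproj
  have E2 : ((Fin (N' + 1) → R ⧸ I) ⧸ (R ∙ z))
      ≃ₗ[R] ((Fin (N' + 1) → R ⧸ I) ⧸ LinearMap.ker proj) :=
    Submodule.quotEquivOfEq _ _ hkerproj'
  have E3 : ((Fin (N' + 1) → R ⧸ I) ⧸ LinearMap.ker proj) ≃ₗ[R] (Fin N' → R ⧸ I) :=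
    proj.quotKerEquivOfSurjective hprojsurj
  exact ⟨N', ⟨E1.trans (E2.trans E3)⟩⟩

end Aux

/-- If `(R, 𝔪)` is a Noetherian local ring, `I` an `𝔪`-primary ideal and `a ∈ I` a
nonzerodivisor with `I² = aI`, then `I/I²` is a free `R/I`-module if and only if
`I/(a)` is a free `R/I`-module. -/
theorem cotangent_free_iff_quot_span_free (R : Type*) [CommRing R] [IsNoetherianRing R]
    [IsLocalRing R]
    (I : Ideal R) (hIm : I ≤ IsLocalRing.maximalIdeal R)
    (hprim : ∃ n : ℕ, IsLocalRing.maximalIdeal R ^ n ≤ I)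
    (a : R) (ha : a ∈ I) (hnzd : a ∈ nonZeroDivisors R)
    (hred : I * I = Ideal.span {a} * I) :
    (∃ n : ℕ, Nonempty
        ((↥I ⧸ Submodule.comap I.subtype (I * I)) ≃ₗ[R] (Fin n → R ⧸ I))) ↔
      (∃ n : ℕ, Nonempty
        ((↥I ⧸ Submodule.comap I.subtype (Ideal.span {a})) ≃ₗ[R] (Fin n → R ⧸ I))) := by
  have htop : I ≠ ⊤ := fun h =>
    (IsLocalRing.maximalIdeal.isMaximal R).ne_top (top_le_iff.mp (h ▸ hIm))
  set M := ↥I ⧸ Submodule.comap I.subtype (I * I) with hM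
  set x : M := Submodule.Quotient.mk ⟨a, ha⟩ with hx
  have htor : ∀ r ∈ I, ∀ m : M, r • m = 0 := by
    intro r hr m
    obtain ⟨z, rfl⟩ := Submodule.Quotient.mk_surjective _ m
    rw [← Submodule.Quotient.mk_smul, Submodule.Quotient.mk_eq_zero]
    refine Submodule.mem_comap.mpr ?_
    show r • (z : R) ∈ I * I
    rw [smul_eq_mul]
    exact Ideal.mul_mem_mul hr z.2
  have hann : ∀ r : R, r • x = 0 ↔ r ∈ I := by
    intro r
    rw [hx, ← Submodule.Quotient.mk_smul, Submodule.Quotient.mk_eq_zero, Submodule.mem_comap]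
    have hval : (I.subtype (r • ⟨a, ha⟩) : R) = r * a := rfl
    rw [hval]
    constructor
    · intro h
      rw [hred] at h
      obtain ⟨t, htI, hta⟩ := Ideal.mem_span_singleton_mul.mp h
      have hz : (t - r) * a = 0 := by
        rw [sub_mul, ← hta]
        ring
      have ht' : t = r := sub_eq_zero.mp ((mem_nonZeroDivisors_iff.mp hnzd).2 _ hz)
      exact ht' ▸ htI
    · intro h
      exact Ideal.mul_mem_mul h ha
  have hle : Submodule.comap I.subtype (I * I) ≤ Submodule.comap I.subtype (Ideal.span {a}) :=
    Submodule.comap_mono (by rw [hred]; exact Ideal.mul_le_left)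
  have hmap : Submodule.map (Submodule.comap I.subtype (I * I)).mkQ
      (Submodule.comap I.subtype (Ideal.span {a})) = R ∙ x := by
    apply le_antisymm
    · rintro _ ⟨z, hz, rfl⟩
      obtain ⟨t, ht⟩ := Ideal.mem_span_singleton'.mp (Submodule.mem_comap.mp hz)
      rw [Submodule.mem_span_singleton]
      refine ⟨t, ?_⟩
      rw [hx, ← Submodule.Quotient.mk_smul]
      show Submodule.Quotient.mk (t • (⟨a, ha⟩ : ↥I)) = Submodule.Quotient.mk z
      congr 1
      exact Subtype.ext (by simpa [smul_eq_mul] using ht)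
    · rw [Submodule.span_singleton_le_iff_mem]
      exact ⟨⟨a, ha⟩, Submodule.mem_comap.mpr (Ideal.mem_span_singleton_self a), rfl⟩
  have equot : (M ⧸ (R ∙ x)) ≃ₗ[R] (↥I ⧸ Submodule.comap I.subtype (Ideal.span {a})) :=
    (Submodule.quotEquivOfEq _ _ hmap.symm).trans
      (Submodule.quotientQuotientEquivQuotient _ _ hle)
  constructor
  · rintro ⟨n, ⟨e⟩⟩
    obtain ⟨n', ⟨e'⟩⟩ := aux_fwd I htop hprim x hann n e
    exact ⟨n', ⟨equot.symm.trans e'⟩⟩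
  · rintro ⟨n, ⟨e⟩⟩
    exact ⟨n + 1, aux_back I htor x hann n (equot.trans e)⟩
end

section
/- Let R be a one-dimensional Cohen–Macaulay Noetherian local ring with maximal ideal 𝔪, let a ∈ 𝔪 be a nonzerodivisor of R, and let A = R ⋉ R be the idealization of R over itself. Then the ideal I = (a) × R = {(x, y) ∈ A : x ∈ aR} is an Ulrich ideal of A, and μ_A(I) = 2. -/
open IsLocalRing

open TrivSqZeroExt

lemma aux_not_mem_minimal {R : Type*} [CommRing R] {a : R}
    (hanzd : a ∈ nonZeroDivisors R) {Q : Ideal R} (hQ : Q ∈ (⊥ : Ideal R).minimalPrimes) :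
    a ∉ Q := by
  intro haQ
  haveI hQp : Q.IsPrime := hQ.1.1
  set L := Localization.AtPrime Q
  have hprimes : ∀ J : Ideal L, J.IsPrime → maximalIdeal L ≤ J := by
    intro J hJ
    have h1 : J.comap (algebraMap R L) ≤ Q := by
      have := Ideal.comap_mono (f := algebraMap R L) (le_maximalIdeal hJ.ne_top)
      exact this.trans Localization.AtPrime.comap_maximalIdeal.le
    have h2 : Q ≤ J.comap (algebraMap R L) :=
      hQ.2 ⟨Ideal.comap_isPrime _ _, bot_le⟩ h1
    calc maximalIdeal L = Ideal.map (algebraMap R L) Q :=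
          (Localization.AtPrime.map_eq_maximalIdeal).symm
      _ ≤ Ideal.map (algebraMap R L) (J.comap (algebraMap R L)) := Ideal.map_mono h2
      _ ≤ J := Ideal.map_comap_le
  have hnil : IsNilpotent (algebraMap R L a) := by
    rw [← mem_nilradical, nilradical_eq_sInf, Ideal.mem_sInf]
    intro J hJ
    exact hprimes J hJ ((IsLocalization.AtPrime.to_map_mem_maximal_iff L Q a).mpr haQ)
  obtain ⟨n, hn⟩ := hnil
  rw [← map_pow, IsLocalization.map_eq_zero_iff Q.primeCompl] at hn
  obtain ⟨m, hm⟩ := hn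
  have : (m : R) = 0 := (mul_right_mem_nonZeroDivisors_eq_zero_iff (pow_mem hanzd n)).mp hm
  exact m.2 (this ▸ Q.zero_mem)

lemma aux_prime_eq_max {R : Type*} [CommRing R] [IsLocalRing R]
    (hdim : ringKrullDim R = 1) {a : R} (hanzd : a ∈ nonZeroDivisors R)
    {P : Ideal R} (hP : P.IsPrime) (haP : a ∈ P) : P = maximalIdeal R := by
  by_contra hne
  have hPle : P < maximalIdeal R := lt_of_le_of_ne (le_maximalIdeal hP.ne_top) hne
  obtain ⟨Q, hQ, hQP⟩ := Ideal.exists_minimalPrimes_le (bot_le (a := P))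
  haveI hQp : Q.IsPrime := hQ.1.1
  have hQlt : Q < P := lt_of_le_of_ne hQP (fun h => aux_not_mem_minimal hanzd hQ (h ▸ haP))
  let pQ : PrimeSpectrum R := ⟨Q, hQp⟩
  let pP : PrimeSpectrum R := ⟨P, hP⟩
  let pm : PrimeSpectrum R := ⟨maximalIdeal R, (maximalIdeal.isMaximal R).isPrime⟩
  have l1 : pQ < pP := (PrimeSpectrum.asIdeal_lt_asIdeal pQ pP).mp hQlt
  have l2 : pP < pm := (PrimeSpectrum.asIdeal_lt_asIdeal pP pm).mp hPle
  let c : LTSeries (PrimeSpectrum R) :=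
    ((RelSeries.singleton _ pQ).snoc pP (by simpa [RelSeries.last_singleton] using l1)).snoc
      pm (by simpa [RelSeries.last_snoc] using l2)
  have h2 := Order.LTSeries.length_le_krullDim c
  have hlen : c.length = 2 := rfl
  rw [hlen, show Order.krullDim (PrimeSpectrum R) = ringKrullDim R from rfl, hdim] at h2
  norm_num at h2

lemma aux_pow_le {R : Type*} [CommRing R] [IsNoetherianRing R] [IsLocalRing R]
    (hdim : ringKrullDim R = 1) {a : R} (ha : a ∈ maximalIdeal R)
    (hanzd : a ∈ nonZeroDivisors R) :
    ∃ n : ℕ, maximalIdeal R ^ n ≤ Ideal.span {a} := by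
  apply Ideal.exists_pow_le_of_le_radical_of_fg _ (IsNoetherian.noetherian _)
  rw [Ideal.radical_eq_sInf]
  intro x hx
  rw [Ideal.mem_sInf]
  rintro J ⟨hle, hJ⟩
  have : J = maximalIdeal R :=
    aux_prime_eq_max hdim hanzd hJ (hle (Ideal.subset_span rfl))
  exact this ▸ hx

set_option maxHeartbeats 1600000 in
/-- **Example 2.7**: if `R` is a one-dimensional Cohen–Macaulay Noetherian local ring,
`a ∈ 𝔪` a nonzerodivisor, and `A = R ⋉ R` the idealization of `R` over itself, then
`I = (a) × R` is an Ulrich ideal of `A` with `μ_A(I) = 2`.  Here the maximal ideal of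
`A` is `𝔫 = 𝔪 × R`, and Ulrich means: `I` is `𝔫`-primary and there is a nonzerodivisor
`α ∈ I` with `I ≠ (α)`, `I² = αI` and `I/I²` a free `A/I`-module. -/
theorem idealization_ulrich_ideal (R : Type*) [CommRing R]
    [IsNoetherianRing R] [IsLocalRing R]
    (hdim : ringKrullDim R = 1)
    (hCM : ∃ x ∈ maximalIdeal R, x ∈ nonZeroDivisors R)
    (a : R) (ha : a ∈ maximalIdeal R) (hanzd : a ∈ nonZeroDivisors R) :
    ∀ (N I : Ideal (TrivSqZeroExt R R)),
      N = Ideal.comap (TrivSqZeroExt.fstHom R R R).toRingHom (maximalIdeal R) →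
      I = Ideal.comap (TrivSqZeroExt.fstHom R R R).toRingHom (Ideal.span {a}) →
      ((I ≤ N ∧ (∃ n : ℕ, N ^ n ≤ I) ∧
        ∃ α ∈ I, α ∈ nonZeroDivisors (TrivSqZeroExt R R) ∧ I ≠ Ideal.span {α} ∧
          I * I = Ideal.span {α} * I ∧
          ∃ n : ℕ, Nonempty (I.Cotangent ≃ₗ[TrivSqZeroExt R R]
            (Fin n → TrivSqZeroExt R R ⧸ I))) ∧
        sInf {n : ℕ | ∃ s : Finset (TrivSqZeroExt R R), s.card = n ∧
          Ideal.span (s : Set (TrivSqZeroExt R R)) = I} = 2) := by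
  intro N I hN hI
  -- basic membership characterizations
  have hmemI : ∀ z : TrivSqZeroExt R R, z ∈ I ↔ fst z ∈ Ideal.span {a} := fun z => by
    rw [hI]; exact Iff.rfl
  have hmemN : ∀ z : TrivSqZeroExt R R, z ∈ N ↔ fst z ∈ maximalIdeal R := fun z => by
    rw [hN]; exact Iff.rfl
  have hcan : ∀ c c' : R, c * a = c' * a → c = c' := by
    intro c c' h
    have h0 : (c - c') * a = 0 := by rw [sub_mul, h, sub_self]
    have := (mul_right_mem_nonZeroDivisors_eq_zero_iff hanzd).mp h0
    exact sub_eq_zero.mp this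
  have ha0 : a ≠ 0 := by
    intro h
    exact one_ne_zero ((mul_right_mem_nonZeroDivisors_eq_zero_iff hanzd).mp (by rw [h, mul_zero]))
  have hαI : (inl a : TrivSqZeroExt R R) ∈ I := (hmemI _).mpr (by simp [Ideal.mem_span_singleton_self])
  have h1I : (inr 1 : TrivSqZeroExt R R) ∈ I := (hmemI _).mpr (by simp)
  -- not principal
  have hprin : ∀ g : TrivSqZeroExt R R, I ≠ Ideal.span {g} := by
    intro g hg
    have hgI : g ∈ I := hg ▸ Ideal.subset_span rfl
    obtain ⟨x, hx⟩ := Ideal.mem_span_singleton'.mp ((hmemI g).mp hgI)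
    have h1 : (inr 1 : TrivSqZeroExt R R) ∈ Ideal.span {g} := hg ▸ h1I
    obtain ⟨c, hc⟩ := Ideal.mem_span_singleton.mp h1
    have hfst : (0 : R) = fst g * fst c := by
      have := congrArg (fst (M := R)) hc; simpa using this
    have hsnd : (1 : R) = fst g * snd c + snd g * fst c := by
      have := congrArg (snd (M := R)) hc
      simpa [snd_mul, op_smul_eq_smul, smul_eq_mul, mul_comm] using this
    have hgm : fst g ∈ maximalIdeal R := by
      have : x * a ∈ maximalIdeal R := Ideal.mul_mem_left _ _ ha
      rwa [hx] at this
    have hunit : IsUnit (snd g * fst c) := by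
      have hmem : fst g * snd c ∈ maximalIdeal R := Ideal.mul_mem_right _ _ hgm
      by_contra hu
      have : snd g * fst c ∈ maximalIdeal R := hu
      have : (1 : R) ∈ maximalIdeal R := hsnd ▸ add_mem hmem this
      exact (maximalIdeal.isMaximal R).ne_top (Ideal.eq_top_of_isUnit_mem _ this isUnit_one)
    have hcu : IsUnit (fst c) := isUnit_of_mul_isUnit_right hunit
    have hg0 : fst g = 0 := (IsUnit.mul_left_eq_zero hcu).mp hfst.symm
    -- now inl a ∈ span {g} gives a = 0
    obtain ⟨d, hd⟩ := Ideal.mem_span_singleton.mp (hg ▸ hαI)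
    have : a = fst g * fst d := by
      have := congrArg (fst (M := R)) hd; simpa using this
    rw [this, hg0, zero_mul] at ha0
    exact ha0 rfl
  refine ⟨⟨?_, ?_, ?_⟩, ?_⟩
  · -- I ≤ N
    intro z hz
    exact (hmemN z).mpr
      (Ideal.span_le.mpr (Set.singleton_subset_iff.mpr ha) ((hmemI z).mp hz))
  · -- ∃ n, N ^ n ≤ I
    obtain ⟨n, hn⟩ := aux_pow_le hdim ha hanzd
    refine ⟨n, ?_⟩
    rw [hI, ← Ideal.map_le_iff_le_comap, Ideal.map_pow]
    refine le_trans (Ideal.pow_right_mono ?_ n) hn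
    rw [Ideal.map_le_iff_le_comap, hN]
  · -- Ulrich conditions
    classical
    have hIImem : ∀ z : TrivSqZeroExt R R, z ∈ I * I ↔
        (∃ c, c * (a * a) = fst z) ∧ (∃ c, c * a = snd z) := by
      have hspan2 : I * I = Ideal.span {inl (a * a), inr a} := by
        apply le_antisymm
        · apply Ideal.mul_le.mpr
          intro r hr s hs
          obtain ⟨e, he⟩ := Ideal.mem_span_singleton'.mp ((hmemI r).mp hr)
          obtain ⟨k, hk⟩ := Ideal.mem_span_singleton'.mp ((hmemI s).mp hs)
          rw [Ideal.mem_span_pair]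
          refine ⟨inl (e * k), inl (e * snd s + k * snd r), ?_⟩
          ext
          · simp only [fst_add, fst_mul, fst_inl, fst_inr, mul_zero, add_zero]
            rw [← he, ← hk]; ring
          · simp only [snd_add, snd_mul, snd_inl, snd_inr, fst_inl, fst_inr,
              smul_eq_mul, op_smul_eq_smul, smul_zero, mul_zero, zero_mul, mul_one,
              add_zero, zero_add]
            rw [← he, ← hk]; ring
        · rw [Ideal.span_le]
          rintro z (rfl | rfl)
          · rw [← inl_mul_inl]
            exact Ideal.mul_mem_mul hαI hαI
          · have h : (inr a : TrivSqZeroExt R R) = inl a * inr 1 := by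
              ext
              · simp only [fst_mul, fst_inl, fst_inr, mul_zero]
              · simp only [snd_mul, snd_inl, snd_inr, fst_inl, fst_inr,
                  smul_eq_mul, op_smul_eq_smul, mul_one, smul_zero, zero_mul, add_zero, zero_add]
            rw [h]
            exact Ideal.mul_mem_mul hαI h1I
      intro z
      rw [hspan2, Ideal.mem_span_pair]
      constructor
      · rintro ⟨u, v, huv⟩
        constructor
        · refine ⟨fst u, ?_⟩
          have h := congrArg (fst (M := R)) huv
          simp only [fst_add, fst_mul, fst_inl, fst_inr, mul_zero, add_zero] at h
          rw [← h]
        · refine ⟨a * snd u + fst v, ?_⟩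
          have h := congrArg (snd (M := R)) huv
          simp only [snd_add, snd_mul, snd_inl, snd_inr, fst_inl, fst_inr,
            smul_eq_mul, op_smul_eq_smul, smul_zero, mul_zero, zero_mul, mul_one,
            add_zero, zero_add] at h
          rw [← h]; ring
      · rintro ⟨⟨c, hc⟩, ⟨t, ht⟩⟩
        refine ⟨inl c, inl t, ?_⟩
        ext
        · simp only [fst_add, fst_mul, fst_inl, fst_inr, mul_zero, add_zero]
          exact hc
        · simp only [snd_add, snd_mul, snd_inl, snd_inr, fst_inl, fst_inr,
            smul_eq_mul, op_smul_eq_smul, smul_zero, mul_zero, zero_mul, mul_one,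
            add_zero, zero_add]
          exact ht
    refine ⟨inl a, hαI, ?_, hprin (inl a), ?_, ?_⟩
    · -- nonzerodivisor
      rw [mem_nonZeroDivisors_iff_right]
      intro x hx
      have h1 := congrArg (fst (M := R)) hx
      have h2 := congrArg (snd (M := R)) hx
      simp only [fst_mul, fst_inl, fst_zero, snd_mul, snd_inl, snd_inr, snd_zero,
        smul_eq_mul, op_smul_eq_smul, smul_zero, mul_zero, zero_add, add_zero] at h1 h2
      ext
      · simp only [fst_zero]
        exact (mul_right_mem_nonZeroDivisors_eq_zero_iff hanzd).mp h1
      · simp only [snd_zero]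
        exact (mul_right_mem_nonZeroDivisors_eq_zero_iff hanzd).mp (by rw [mul_comm] at h2; exact h2)
    · -- I * I = span {inl a} * I
      apply le_antisymm
      · apply Ideal.mul_le.mpr
        intro r hr s hs
        obtain ⟨e, he⟩ := Ideal.mem_span_singleton'.mp ((hmemI r).mp hr)
        obtain ⟨k, hk⟩ := Ideal.mem_span_singleton'.mp ((hmemI s).mp hs)
        have hw : (inl (e * fst s) + inr (e * snd s + k * snd r) : TrivSqZeroExt R R) ∈ I := by
          refine (hmemI _).mpr (Ideal.mem_span_singleton'.mpr ⟨e * k, ?_⟩)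
          simp only [fst_add, fst_inl, fst_inr, add_zero]
          rw [← hk]; ring
        have heq : r * s = inl a * (inl (e * fst s) + inr (e * snd s + k * snd r)) := by
          ext
          · simp only [fst_mul, fst_add, fst_inl, fst_inr, add_zero]
            rw [← he]; ring
          · simp only [snd_mul, snd_add, snd_inl, snd_inr, fst_add, fst_inl, fst_inr,
              smul_eq_mul, op_smul_eq_smul, smul_zero, mul_zero, zero_mul, add_zero, zero_add]
            rw [← he, ← hk]; ring
        rw [heq]
        exact Ideal.mul_mem_mul (Ideal.subset_span rfl) hw
      · apply Ideal.mul_le.mpr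
        intro r hr s hs
        have hrI : r ∈ I := (Ideal.span_le.mpr (Set.singleton_subset_iff.mpr hαI)) hr
        exact Ideal.mul_mem_mul hrI hs
    · -- cotangent is free of rank 2
      refine ⟨2, ?_⟩
      have hex : ∀ z : I, ∃ c : R, c * a = fst (z : TrivSqZeroExt R R) :=
        fun z => Ideal.mem_span_singleton'.mp ((hmemI _).mp z.2)
      choose dd hdd using hex
      have hco : ∀ (r : TrivSqZeroExt R R) (z : I),
          ((r • z : I) : TrivSqZeroExt R R) = r * (z : TrivSqZeroExt R R) := fun r z => rfl
      have hcoadd : ∀ z w : I, ((z + w : I) : TrivSqZeroExt R R)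
          = (z : TrivSqZeroExt R R) + (w : TrivSqZeroExt R R) := fun z w => rfl
      have hdd_add : ∀ z w : I, dd (z + w) = dd z + dd w := by
        intro z w
        apply hcan
        have h1 : dd (z + w) * a = fst (z : TrivSqZeroExt R R) + fst (w : TrivSqZeroExt R R) := by
          rw [hdd, hcoadd, fst_add]
        have h2 : (dd z + dd w) * a
            = fst (z : TrivSqZeroExt R R) + fst (w : TrivSqZeroExt R R) := by
          rw [add_mul, hdd, hdd]
        rw [h1, h2]
      have hdd_smul : ∀ (r : TrivSqZeroExt R R) (z : I), dd (r • z) = fst r * dd z := by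
        intro r z
        apply hcan
        have h1 : dd (r • z) * a = fst r * fst (z : TrivSqZeroExt R R) := by
          rw [hdd, hco, fst_mul]
        have h2 : fst r * dd z * a = fst r * fst (z : TrivSqZeroExt R R) := by
          rw [mul_assoc, hdd]
        rw [h1, h2]
      have mkeq : ∀ x y : TrivSqZeroExt R R, fst (x - y) ∈ Ideal.span {a} →
          Ideal.Quotient.mk I x = Ideal.Quotient.mk I y :=
        fun x y h => Ideal.Quotient.eq.mpr ((hmemI _).mpr h)
      have hsmul : ∀ (r x : TrivSqZeroExt R R),
          r • Ideal.Quotient.mk I x = Ideal.Quotient.mk I (r * x) := by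
        intro r x
        rw [← Ideal.Quotient.mk_eq_mk, ← Ideal.Quotient.mk_eq_mk, ← Submodule.Quotient.mk_smul,
          smul_eq_mul]
      obtain ⟨f₀, hf₀⟩ : ∃ f₀ : I →ₗ[TrivSqZeroExt R R] TrivSqZeroExt R R ⧸ I,
          ∀ z : I, f₀ z = Ideal.Quotient.mk I (inl (dd z)) := by
        refine ⟨{ toFun := fun z => Ideal.Quotient.mk I (inl (dd z)),
                  map_add' := ?_,
                  map_smul' := ?_ }, fun z => rfl⟩
        · intro z w
          show Ideal.Quotient.mk I (inl (dd (z + w)))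
            = Ideal.Quotient.mk I (inl (dd z)) + Ideal.Quotient.mk I (inl (dd w))
          rw [← map_add, hdd_add]
          apply mkeq
          simp only [fst_sub, fst_add, fst_inl, sub_self]
          exact Ideal.zero_mem _
        · intro r z
          show Ideal.Quotient.mk I (inl (dd (r • z)))
            = r • Ideal.Quotient.mk I (inl (dd z))
          rw [hdd_smul, hsmul]
          apply mkeq
          simp only [fst_sub, fst_mul, fst_inl, sub_self]
          exact Ideal.zero_mem _
      obtain ⟨f₁, hf₁⟩ : ∃ f₁ : I →ₗ[TrivSqZeroExt R R] TrivSqZeroExt R R ⧸ I,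
          ∀ z : I, f₁ z = Ideal.Quotient.mk I (inl (snd (z : TrivSqZeroExt R R))) := by
        refine ⟨{ toFun := fun z => Ideal.Quotient.mk I (inl (snd (z : TrivSqZeroExt R R))),
                  map_add' := ?_,
                  map_smul' := ?_ }, fun z => rfl⟩
        · intro z w
          show Ideal.Quotient.mk I (inl (snd ((z + w : I) : TrivSqZeroExt R R)))
            = Ideal.Quotient.mk I (inl (snd (z : TrivSqZeroExt R R)))
              + Ideal.Quotient.mk I (inl (snd (w : TrivSqZeroExt R R)))
          rw [← map_add]
          apply mkeq
          simp only [hcoadd, fst_sub, fst_add, fst_inl, snd_add, sub_self]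
          exact Ideal.zero_mem _
        · intro r z
          show Ideal.Quotient.mk I (inl (snd ((r • z : I) : TrivSqZeroExt R R)))
            = r • Ideal.Quotient.mk I (inl (snd (z : TrivSqZeroExt R R)))
          rw [hsmul]
          apply mkeq
          refine Ideal.mem_span_singleton'.mpr ⟨dd z * snd r, ?_⟩
          simp only [hco, fst_sub, fst_mul, fst_inl, snd_mul,
            smul_eq_mul, op_smul_eq_smul]
          rw [← hdd]; ring
      obtain ⟨f, hfapp0, hfapp1⟩ : ∃ f : I →ₗ[TrivSqZeroExt R R]
            (Fin 2 → TrivSqZeroExt R R ⧸ I),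
          (∀ z : I, f z 0 = Ideal.Quotient.mk I (inl (dd z))) ∧
          (∀ z : I, f z 1 = Ideal.Quotient.mk I (inl (snd (z : TrivSqZeroExt R R)))) := by
        refine ⟨LinearMap.pi (fun i => if i = 0 then f₀ else f₁), fun z => ?_, fun z => ?_⟩
        · show (if (0 : Fin 2) = 0 then f₀ else f₁) z = _
          rw [if_pos rfl, hf₀]
        · show (if (1 : Fin 2) = 0 then f₀ else f₁) z = _
          rw [if_neg (by decide), hf₁]
      have hker : ∀ z : I, f z = 0 ↔ (z : TrivSqZeroExt R R) ∈ I * I := by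
        intro z
        rw [hIImem]
        constructor
        · intro h
          have h0 := congrFun h 0
          have h1 := congrFun h 1
          rw [hfapp0] at h0
          rw [hfapp1] at h1
          simp only [Pi.zero_apply] at h0 h1
          rw [Ideal.Quotient.eq_zero_iff_mem] at h0 h1
          obtain ⟨c, hc⟩ := Ideal.mem_span_singleton'.mp (by
            have := (hmemI _).mp h0; rwa [fst_inl] at this)
          obtain ⟨t, ht⟩ := Ideal.mem_span_singleton'.mp (by
            have := (hmemI _).mp h1; rwa [fst_inl] at this)
          refine ⟨⟨c, ?_⟩, ⟨t, ht⟩⟩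
          rw [← hdd z, ← hc]; ring
        · rintro ⟨⟨c, hc⟩, ⟨t, ht⟩⟩
          funext i
          fin_cases i
          · show f z 0 = 0
            rw [hfapp0, Ideal.Quotient.eq_zero_iff_mem]
            refine (hmemI _).mpr ?_
            rw [fst_inl]
            have hddz : dd z = c * a := by
              apply hcan
              rw [hdd, ← hc]; ring
            exact Ideal.mem_span_singleton'.mpr ⟨c, hddz.symm⟩
          · show f z 1 = 0
            rw [hfapp1, Ideal.Quotient.eq_zero_iff_mem]
            refine (hmemI _).mpr ?_
            rw [fst_inl]
            exact Ideal.mem_span_singleton'.mpr ⟨t, ht⟩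
      have hsurj : Function.Surjective f := by
        intro v
        obtain ⟨b0, hb0⟩ := Ideal.Quotient.mk_surjective (v 0)
        obtain ⟨b1, hb1⟩ := Ideal.Quotient.mk_surjective (v 1)
        have hzI : (inl (a * fst b0) + inr (fst b1) : TrivSqZeroExt R R) ∈ I := by
          refine (hmemI _).mpr (Ideal.mem_span_singleton'.mpr ⟨fst b0, ?_⟩)
          simp only [fst_add, fst_inl, fst_inr, add_zero]
          ring
        refine ⟨⟨_, hzI⟩, ?_⟩
        funext i
        fin_cases i
        · show f _ 0 = v 0
          rw [hfapp0, ← hb0]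
          have hddz : dd ⟨_, hzI⟩ = fst b0 := by
            apply hcan
            rw [hdd]
            simp only [fst_add, fst_inl, fst_inr, add_zero]
            ring
          rw [hddz]
          apply mkeq
          simp only [fst_sub, fst_inl, sub_self]
          exact Ideal.zero_mem _
        · show f _ 1 = v 1
          rw [hfapp1, ← hb1]
          have hsz : snd ((⟨_, hzI⟩ : I) : TrivSqZeroExt R R) = fst b1 := by
            simp only [snd_add, snd_inl, snd_inr, zero_add]
          rw [hsz]
          apply mkeq
          simp only [fst_sub, fst_inl, sub_self]
          exact Ideal.zero_mem _
      have hle : (I • ⊤ : Submodule (TrivSqZeroExt R R) I) ≤ LinearMap.ker f := by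
        rw [Submodule.smul_le]
        intro r hr z _
        rw [LinearMap.mem_ker, hker, hco]
        exact Ideal.mul_mem_mul hr z.2
      let g : I.Cotangent →ₗ[TrivSqZeroExt R R] (Fin 2 → TrivSqZeroExt R R ⧸ I) :=
        Submodule.liftQ _ f hle
      have hg : ∀ z : I, g (I.toCotangent z) = f z := fun z => rfl
      have hginj : Function.Injective g := by
        intro x y hxy
        obtain ⟨x, rfl⟩ := I.toCotangent_surjective x
        obtain ⟨y, rfl⟩ := I.toCotangent_surjective y
        rw [hg, hg] at hxy
        have h0 : f (x - y) = 0 := by rw [map_sub, hxy, sub_self]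
        rw [hker] at h0
        refine I.toCotangent_eq.mpr ?_
        rw [pow_two]
        exact h0
      have hgsurj : Function.Surjective g := by
        intro v
        obtain ⟨z, hz⟩ := hsurj v
        exact ⟨I.toCotangent z, (hg z).trans hz⟩
      exact ⟨LinearEquiv.ofBijective g ⟨hginj, hgsurj⟩⟩
  · -- μ = 2
    classical
    have hins : (inl a : TrivSqZeroExt R R) ≠ inr 1 := by
      intro h
      have := congrArg (fst (M := R)) h
      simpa [ha0] using this
    have h2mem : 2 ∈ {n : ℕ | ∃ s : Finset (TrivSqZeroExt R R), s.card = n ∧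
        Ideal.span (s : Set (TrivSqZeroExt R R)) = I} := by
      refine ⟨({inl a, inr (1:R)} : Finset (TrivSqZeroExt R R)), Finset.card_pair hins, ?_⟩
      rw [Finset.coe_insert, Finset.coe_singleton]
      apply le_antisymm
      · rw [Ideal.span_le]
        rintro z (rfl | rfl)
        · exact hαI
        · exact h1I
      · intro z hz
        obtain ⟨e, he⟩ := Ideal.mem_span_singleton'.mp ((hmemI z).mp hz)
        rw [Ideal.mem_span_pair]
        refine ⟨inl e, inl (snd z), ?_⟩
        ext
        · simp only [fst_add, fst_mul, fst_inl, fst_inr, mul_zero, add_zero]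
          exact he
        · simp only [snd_add, snd_mul, snd_inl, snd_inr, fst_inl, fst_inr,
            smul_eq_mul, op_smul_eq_smul, smul_zero, mul_zero, zero_mul,
            mul_one, add_zero, zero_add, mul_zero]
    apply le_antisymm
    · exact Nat.sInf_le h2mem
    · apply le_csInf ⟨2, h2mem⟩
      rintro n ⟨s, hcard, hspan⟩
      by_contra hlt
      push_neg at hlt
      interval_cases n
      · rw [Finset.card_eq_zero] at hcard
        subst hcard
        simp only [Finset.coe_empty, Ideal.span_empty] at hspan
        rw [← hspan] at h1I
        have : (inr 1 : TrivSqZeroExt R R) = 0 := h1I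
        have := congrArg (snd (M := R)) this
        simpa using this
      · rw [Finset.card_eq_one] at hcard
        obtain ⟨g, rfl⟩ := hcard
        simp only [Finset.coe_singleton] at hspan
        exact hprin g hspan.symm
end
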